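/- For any red-black tree t with black height n, we have ⌊(⌈log₂(1 + |t|)⌉ − 1)/2⌋ ≤ n, where |t| denotes the number of internal (key-carrying) nodes of t. -/

import Mathlib

/-- Node colors for red-black trees. -/
inductive Color where
  | red : Color
  | black : Color
deriving DecidableEq

/-- Plain binary trees with colored nodes. -/
inductive RBTree (α : Type) where
  | leaf : RBTree α
  | node : Color → RBTree α → α → RBTree α → RBTree α

namespace RBTree

variable {α : Type}

/-- The black height of a tree (computed along the left spine). -/
def blackHeight : RBTree α → ℕ
  | leaf => 0
  | node Color.red l _ _ => blackHeight l
  | node Color.black l _ _ => blackHeight l + 1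

/-- The color of the root; leaves count as black. -/
def rootColor : RBTree α → Color
  | leaf => Color.black
  | node c _ _ _ => c

/-- In-order traversal. -/
def inorder : RBTree α → List α
  | leaf => []
  | node _ l a r => inorder l ++ a :: inorder r

/-- Number of internal (key-carrying) nodes. -/
def size : RBTree α → ℕ
  | leaf => 0
  | node _ l _ r => size l + 1 + size r

/-- `IsRBT t y n` means `t` is a valid red-black tree with root color `y`
and black height `n`, mirroring the indexed inductive family `irbt`. -/
inductive IsRBT : RBTree α → Color → ℕ → Prop where
  | leaf : IsRBT leaf Color.black 0
  | red {t₁ t₂ : RBTree α} {n : ℕ} (a : α) :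
      IsRBT t₁ Color.black n → IsRBT t₂ Color.black n →
      IsRBT (node Color.red t₁ a t₂) Color.red n
  | black {t₁ t₂ : RBTree α} {y₁ y₂ : Color} {n : ℕ} (a : α) :
      IsRBT t₁ y₁ n → IsRBT t₂ y₂ n →
      IsRBT (node Color.black t₁ a t₂) Color.black (n + 1)

end RBTree

private def redCost : Color → ℕ
  | Color.red => 1
  | Color.black => 0

private theorem size_bound {α : Type} {t : RBTree α} {y : Color} {n : ℕ}
    (h : RBTree.IsRBT t y n) :
    t.size + 1 ≤ 2 ^ (2 * n + redCost y) := by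
  induction h with
  | leaf => simp [RBTree.size, redCost]
  | @red t₁ t₂ m a h1 h2 ih1 ih2 =>
      simp only [RBTree.size, redCost] at *
      have : 2 ^ (2 * m + 1) = 2 ^ (2 * m + 0) + 2 ^ (2 * m + 0) := by ring
      omega
  | @black t₁ t₂ y₁ y₂ m a h1 h2 ih1 ih2 =>
      simp only [RBTree.size, redCost] at *
      have h1' : t₁.size + 1 ≤ 2 ^ (2 * m + 1) :=
        le_trans ih1 (Nat.pow_le_pow_right (by norm_num)
          (by cases y₁ <;> simp [redCost]))
      have h2' : t₂.size + 1 ≤ 2 ^ (2 * m + 1) :=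
        le_trans ih2 (Nat.pow_le_pow_right (by norm_num)
          (by cases y₂ <;> simp [redCost]))
      have : 2 ^ (2 * (m + 1) + 0) = 2 ^ (2 * m + 1) + 2 ^ (2 * m + 1) := by ring
      omega

/-- **Lower bound on the black height.**  For any red-black tree `t` with
black height `n`, we have `⌊(⌈log₂ (1 + |t|)⌉ - 1) / 2⌋ ≤ n`, where `|t|` is
the number of internal (key-carrying) nodes of `t`.  (`Nat.clog 2` is the
ceiling base-2 logarithm; natural-number subtraction and division realize
the truncations.) -/
theorem clog_le_blackHeight {α : Type} {y : Color} {n : ℕ} (t : RBTree α)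
    (h : RBTree.IsRBT t y n) :
    (Nat.clog 2 (1 + t.size) - 1) / 2 ≤ n := by
  have hb := size_bound h
  have hle : 1 + t.size ≤ 2 ^ (2 * n + 2) := by
    refine le_trans (by omega) (le_trans hb (Nat.pow_le_pow_right (by norm_num) ?_))
    cases y <;> simp [redCost]
  have := (Nat.clog_le_iff_le_pow (by norm_num : 1 < 2)).mpr hle
  omega
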